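/- Let X be a complex Banach space and T ∈ L(X) with sup_n ‖Tⁿ‖ < ∞. Then T is uniformly mean ergodic if and only if (I − T)(X) is a closed subspace of X. -/

import Mathlib

open Filter Topology

/-- The `n`-th Cesàro mean `(1/n) ∑_{j=1}^n T^j` of a continuous linear operator. -/
noncomputable def cesaroMean {X : Type*} [NormedAddCommGroup X] [NormedSpace ℂ X]
    (T : X →L[ℂ] X) (n : ℕ) : X →L[ℂ] X :=
  (n : ℂ)⁻¹ • ∑ j ∈ Finset.range n, T ^ (j + 1)

namespace DunfordLin

variable {X : Type*} [NormedAddCommGroup X] [NormedSpace ℂ X] (T : X →L[ℂ] X)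

noncomputable def bMean (n : ℕ) : X →L[ℂ] X :=
  (n : ℂ)⁻¹ • ∑ j ∈ Finset.range n, ∑ i ∈ Finset.range (j + 1), T ^ i

lemma commute_ces (S : X →L[ℂ] X) (h : Commute S T) (n : ℕ) :
    Commute S (cesaroMean T n) :=
  (Commute.sum_right _ _ _ fun j _ => h.pow_right _).smul_right _

lemma commute_T_ces (n : ℕ) : Commute T (cesaroMean T n) :=
  commute_ces T T (Commute.refl T) n

lemma commute_ces_ces (m n : ℕ) : Commute (cesaroMean T m) (cesaroMean T n) :=
  commute_ces T _ (commute_T_ces T m).symm n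

lemma ces_mul_one_sub (n : ℕ) :
    cesaroMean T n * (1 - T) = (n : ℂ)⁻¹ • (T ^ 1 - T ^ (n + 1)) := by
  unfold cesaroMean
  rw [smul_mul_assoc, Finset.sum_mul]
  congr 1
  have h : ∀ j, T ^ (j + 1) * (1 - T) = T ^ (j + 1) - T ^ (j + 1 + 1) := by
    intro j; rw [mul_sub, mul_one, ← pow_succ]
  simp_rw [h]
  exact Finset.sum_range_sub' (fun j => T ^ (j + 1)) n

lemma norm_ces_mul_one_sub_le (C : ℝ) (hbd : ∀ k : ℕ, ‖T ^ k‖ ≤ C) (n : ℕ) :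
    ‖cesaroMean T n * (1 - T)‖ ≤ (n : ℝ)⁻¹ * (2 * C) := by
  rw [ces_mul_one_sub]
  rw [norm_smul ((n:ℂ))⁻¹ (T ^ 1 - T ^ (n+1))]
  have h1 : ‖((n : ℂ))⁻¹‖ = (n : ℝ)⁻¹ := by
    simp
  rw [h1]
  rcases Nat.eq_zero_or_pos n with h | h
  · simp [h]
  gcongr
  calc ‖T ^ 1 - T ^ (n + 1)‖ ≤ ‖T ^ 1‖ + ‖T ^ (n + 1)‖ := norm_sub_le _ _
    _ ≤ C + C := add_le_add (hbd 1) (hbd (n + 1))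
    _ = 2 * C := by ring

lemma norm_ces_le (C : ℝ) (hbd : ∀ k : ℕ, ‖T ^ k‖ ≤ C) (hC : 0 ≤ C) (n : ℕ) :
    ‖cesaroMean T n‖ ≤ C := by
  rcases Nat.eq_zero_or_pos n with h | h
  · simp [cesaroMean, h, hC]
  unfold cesaroMean
  rw [norm_smul ((n:ℂ))⁻¹ (∑ j ∈ Finset.range n, T ^ (j + 1))]
  have h1 : ‖((n : ℂ))⁻¹‖ = (n : ℝ)⁻¹ := by simp
  have h2 : ‖∑ j ∈ Finset.range n, T ^ (j + 1)‖ ≤ (n : ℝ) * C := by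
    calc ‖∑ j ∈ Finset.range n, T ^ (j + 1)‖ ≤ ∑ j ∈ Finset.range n, ‖T ^ (j + 1)‖ :=
          norm_sum_le _ _
      _ ≤ ∑ _j ∈ Finset.range n, C := Finset.sum_le_sum fun j _ => hbd (j + 1)
      _ = (n : ℝ) * C := by simp [mul_comm]
  rw [h1]
  calc (n : ℝ)⁻¹ * ‖∑ j ∈ Finset.range n, T ^ (j + 1)‖ ≤ (n : ℝ)⁻¹ * ((n : ℝ) * C) := by
        gcongr
    _ = C := by
        rw [← mul_assoc, inv_mul_cancel₀ (by exact_mod_cast h.ne'), one_mul]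

lemma one_sub_ces (n : ℕ) (hn : 1 ≤ n) :
    1 - cesaroMean T n = (1 - T) * bMean T n := by
  unfold cesaroMean bMean
  rw [mul_smul_comm, Finset.mul_sum]
  have h1 : ∀ j, (1 - T) * ∑ i ∈ Finset.range (j + 1), T ^ i = 1 - T ^ (j + 1) := by
    intro j
    rw [← neg_sub T 1, neg_mul, mul_geom_sum, neg_sub]
  simp_rw [h1]
  rw [Finset.sum_sub_distrib, Finset.sum_const, Finset.card_range, smul_sub,
    ← Nat.cast_smul_eq_nsmul ℂ, smul_smul,
    inv_mul_cancel₀ (by exact_mod_cast hn.trans_lt' zero_lt_one |>.ne'), one_smul]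

end DunfordLin

open DunfordLin in
/-- Dunford–Lin: uniform mean ergodicity is equivalent to closedness of `(I - T)(X)`. -/
theorem stmt_5 {X : Type*} [NormedAddCommGroup X] [NormedSpace ℂ X] [CompleteSpace X]
    (T : X →L[ℂ] X) (C : ℝ) (hbd : ∀ n : ℕ, ‖T ^ n‖ ≤ C) :
    (∃ P : X →L[ℂ] X, Tendsto (cesaroMean T) atTop (𝓝 P)) ↔
      IsClosed ((LinearMap.range ((1 - T : X →L[ℂ] X) : X →ₗ[ℂ] X) : Submodule ℂ X) : Set X) := by
  have hC0 : 0 ≤ C := le_trans (norm_nonneg _) (hbd 0)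
  constructor
  · rintro ⟨P, hP⟩
    -- P * (1 - T) = 0
    have ha : Tendsto (fun n => cesaroMean T n * (1 - T)) atTop (𝓝 (P * (1 - T))) :=
      hP.mul tendsto_const_nhds
    have hb : Tendsto (fun n => cesaroMean T n * (1 - T)) atTop (𝓝 0) := by
      apply squeeze_zero_norm (fun n => norm_ces_mul_one_sub_le T C hbd n)
      simpa using tendsto_inv_atTop_nhds_zero_nat.mul_const (2 * C)
    have hP1 : P * (1 - T) = 0 := tendsto_nhds_unique ha hb
    have hPT : P * T = P := by
      have : P * 1 - P * T = 0 := by rw [← mul_sub]; exact hP1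
      rw [mul_one] at this
      exact (sub_eq_zero.mp this).symm
    -- P commutes with each cesaroMean
    have hPces : ∀ n, P * cesaroMean T n = cesaroMean T n * P := by
      intro n
      have h1 : Tendsto (fun m => cesaroMean T m * cesaroMean T n) atTop
          (𝓝 (P * cesaroMean T n)) := hP.mul tendsto_const_nhds
      have h2 : Tendsto (fun m => cesaroMean T m * cesaroMean T n) atTop
          (𝓝 (cesaroMean T n * P)) := by
        have he : (fun m => cesaroMean T m * cesaroMean T n)
            = fun m => cesaroMean T n * cesaroMean T m :=
          funext fun m => (commute_ces_ces T m n).eq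
        rw [he]
        exact tendsto_const_nhds.mul hP
      exact tendsto_nhds_unique h1 h2
    -- P * T^(k+1) = P
    have hPpow : ∀ k : ℕ, P * T ^ (k + 1) = P := by
      intro k
      induction k with
      | zero => simpa using hPT
      | succ k ih => rw [pow_succ, ← mul_assoc, ih, hPT]
    -- P * cesaroMean T n = P for n ≥ 1
    have hPces' : ∀ n : ℕ, 1 ≤ n → P * cesaroMean T n = P := by
      intro n hn
      unfold cesaroMean
      rw [mul_smul_comm, Finset.mul_sum]
      simp_rw [hPpow]
      rw [Finset.sum_const, Finset.card_range, ← Nat.cast_smul_eq_nsmul ℂ, smul_smul,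
        inv_mul_cancel₀ (by exact_mod_cast (hn.trans_lt' zero_lt_one).ne'), one_smul]
    -- the range equals ker P
    have hset : ((LinearMap.range ((1 - T : X →L[ℂ] X) : X →ₗ[ℂ] X) : Submodule ℂ X) : Set X) = P ⁻¹' {0} := by
      ext x
      simp only [SetLike.mem_coe, LinearMap.mem_range, Set.mem_preimage, Set.mem_singleton_iff]
      constructor
      · rintro ⟨y, rfl⟩
        have : P (((1 - T : X →L[ℂ] X) : X →ₗ[ℂ] X) y) = (P * (1 - T)) y := rfl
        rw [this, hP1, ContinuousLinearMap.zero_apply]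
      · intro hx
        -- pick n ≥ 1 with ‖cesaroMean T n - P‖ < 1
        have hev : ∀ᶠ n in atTop, ‖cesaroMean T n - P‖ < 1 := by
          have := (tendsto_iff_norm_sub_tendsto_zero.mp hP)
          exact this.eventually_lt_const zero_lt_one
        obtain ⟨n, hn1, hnorm⟩ := ((eventually_ge_atTop 1).and hev).exists
        set t : X →L[ℂ] X := cesaroMean T n - P with ht
        set u : (X →L[ℂ] X)ˣ := Units.oneSub t hnorm with hu
        have hcomm : Commute P t := by
          have h1 : Commute P (cesaroMean T n) := hPces n
          exact h1.sub_right (Commute.refl P)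
        have hcu : Commute P (↑u : X →L[ℂ] X) := by
          have : (↑u : X →L[ℂ] X) = 1 - t := rfl
          rw [this]
          exact (Commute.one_right P).sub_right hcomm
        have hcui : Commute P (↑u⁻¹ : X →L[ℂ] X) := hcu.units_inv_right
        set z : X := (↑u⁻¹ : X →L[ℂ] X) x with hz
        have hPz : P z = 0 := by
          have h1 : P ((↑u⁻¹ : X →L[ℂ] X) x) = (↑u⁻¹ : X →L[ℂ] X) (P x) := by
            rw [← ContinuousLinearMap.mul_apply, hcui.eq, ContinuousLinearMap.mul_apply]
          rw [hz, h1, hx, map_zero]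
        have huz : ((1 : X →L[ℂ] X) - t) z = x := by
          have h1 : ((↑u : X →L[ℂ] X) * (↑u⁻¹ : X →L[ℂ] X)) x = x := by
            rw [u.mul_inv]; rfl
          have h2 : (↑u : X →L[ℂ] X) = 1 - t := rfl
          rw [← h2]
          exact h1
        have hx2 : ((1 : X →L[ℂ] X) - cesaroMean T n) z = x := by
          have : ((1 : X →L[ℂ] X) - cesaroMean T n) z = ((1 : X →L[ℂ] X) - t) z - P z := by
            simp only [ht, ContinuousLinearMap.sub_apply, ContinuousLinearMap.one_apply]
            abel
          rw [this, huz, hPz, sub_zero]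
        refine ⟨bMean T n z, ?_⟩
        have h3 := one_sub_ces T n hn1
        calc (1 - T) (bMean T n z) = ((1 - T) * bMean T n) z := rfl
          _ = ((1 : X →L[ℂ] X) - cesaroMean T n) z := by rw [← h3]
          _ = x := hx2
    rw [hset]
    exact IsClosed.preimage P.continuous isClosed_singleton
  · intro hR
    haveI : CompleteSpace (LinearMap.range ((1 - T : X →L[ℂ] X) : X →ₗ[ℂ] X) : Submodule ℂ X) := hR.completeSpace_coe
    set R : Submodule ℂ X := LinearMap.range ((1 - T : X →L[ℂ] X) : X →ₗ[ℂ] X) with hRdef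
    set f : X →L[ℂ] R := (1 - T).codRestrict R (fun x => LinearMap.mem_range_self _ x) with hf
    have hsurj : Function.Surjective f := by
      rintro ⟨y, hy⟩
      obtain ⟨x, hx⟩ := LinearMap.mem_range.mp hy
      exact ⟨x, Subtype.ext hx⟩
    obtain ⟨c, hc0, hc⟩ := f.exists_preimage_norm_le hsurj
    have hsmall : ∀ (m : ℕ) (y : X), y ∈ R →
        ‖cesaroMean T m y‖ ≤ (m : ℝ)⁻¹ * (2 * C) * (c * ‖y‖) := by
      intro m y hy
      obtain ⟨x, hfx, hxle⟩ := hc ⟨y, hy⟩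
      have hxy : (1 - T) x = y := by
        have := congrArg Subtype.val hfx
        simpa [hf] using this
      have h1 : cesaroMean T m y = (cesaroMean T m * (1 - T)) x := by
        rw [ContinuousLinearMap.mul_apply, hxy]
      have hnorm : ‖(⟨y, hy⟩ : R)‖ = ‖y‖ := rfl
      rw [h1]
      calc ‖(cesaroMean T m * (1 - T)) x‖ ≤ ‖cesaroMean T m * (1 - T)‖ * ‖x‖ :=
            ContinuousLinearMap.le_opNorm _ _
        _ ≤ ((m : ℝ)⁻¹ * (2 * C)) * (c * ‖y‖) := by
            apply mul_le_mul (norm_ces_mul_one_sub_le T C hbd m) _ (norm_nonneg _) (by positivity)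
            rw [← hnorm]
            exact hxle
    have hmem : ∀ (n : ℕ), 1 ≤ n → ∀ x : X, x - cesaroMean T n x ∈ R := by
      intro n hn x
      refine LinearMap.mem_range.mpr ⟨bMean T n x, ?_⟩
      calc (1 - T) (bMean T n x) = ((1 - T) * bMean T n) x := rfl
        _ = ((1 : X →L[ℂ] X) - cesaroMean T n) x := by rw [← one_sub_ces T n hn]
        _ = x - cesaroMean T n x := by
            simp [ContinuousLinearMap.sub_apply]
    set K : ℝ := 2 * C * (c * (1 + C)) with hK
    have hKnn : 0 ≤ K := by positivity
    have hnd : ∀ (x : X) (n : ℕ), ‖x - cesaroMean T n x‖ ≤ (1 + C) * ‖x‖ := by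
      intro x n
      calc ‖x - cesaroMean T n x‖ ≤ ‖x‖ + ‖cesaroMean T n x‖ := norm_sub_le _ _
        _ ≤ ‖x‖ + C * ‖x‖ := by
            gcongr
            calc ‖cesaroMean T n x‖ ≤ ‖cesaroMean T n‖ * ‖x‖ :=
                  ContinuousLinearMap.le_opNorm _ _
              _ ≤ C * ‖x‖ := by gcongr; exact norm_ces_le T C hbd hC0 n
        _ = (1 + C) * ‖x‖ := by ring
    have hdiff : ∀ m n : ℕ, 1 ≤ m → 1 ≤ n →
        ‖cesaroMean T m - cesaroMean T n‖ ≤ ((m : ℝ)⁻¹ + (n : ℝ)⁻¹) * K := by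
      intro m n hm hn
      apply ContinuousLinearMap.opNorm_le_bound _ (by positivity)
      intro x
      have key : (cesaroMean T m - cesaroMean T n) x
          = cesaroMean T m (x - cesaroMean T n x) - cesaroMean T n (x - cesaroMean T m x) := by
        have hcom : cesaroMean T m (cesaroMean T n x) = cesaroMean T n (cesaroMean T m x) := by
          rw [← ContinuousLinearMap.mul_apply, ← ContinuousLinearMap.mul_apply,
            (commute_ces_ces T m n).eq]
        simp only [ContinuousLinearMap.sub_apply, map_sub]
        rw [hcom]
        abel
      rw [key]
      have h1 : ‖cesaroMean T m (x - cesaroMean T n x)‖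
          ≤ (m : ℝ)⁻¹ * (2 * C) * (c * ((1 + C) * ‖x‖)) := by
        calc ‖cesaroMean T m (x - cesaroMean T n x)‖
            ≤ (m : ℝ)⁻¹ * (2 * C) * (c * ‖x - cesaroMean T n x‖) :=
              hsmall m _ (hmem n hn x)
          _ ≤ (m : ℝ)⁻¹ * (2 * C) * (c * ((1 + C) * ‖x‖)) := by
              gcongr
              exact hnd x n
      have h2 : ‖cesaroMean T n (x - cesaroMean T m x)‖
          ≤ (n : ℝ)⁻¹ * (2 * C) * (c * ((1 + C) * ‖x‖)) := by
        calc ‖cesaroMean T n (x - cesaroMean T m x)‖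
            ≤ (n : ℝ)⁻¹ * (2 * C) * (c * ‖x - cesaroMean T m x‖) :=
              hsmall n _ (hmem m hm x)
          _ ≤ (n : ℝ)⁻¹ * (2 * C) * (c * ((1 + C) * ‖x‖)) := by
              gcongr
              exact hnd x m
      calc ‖cesaroMean T m (x - cesaroMean T n x) - cesaroMean T n (x - cesaroMean T m x)‖
          ≤ ‖cesaroMean T m (x - cesaroMean T n x)‖ + ‖cesaroMean T n (x - cesaroMean T m x)‖ :=
            norm_sub_le _ _
        _ ≤ (m : ℝ)⁻¹ * (2 * C) * (c * ((1 + C) * ‖x‖))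
            + (n : ℝ)⁻¹ * (2 * C) * (c * ((1 + C) * ‖x‖)) := add_le_add h1 h2
        _ = ((m : ℝ)⁻¹ + (n : ℝ)⁻¹) * K * ‖x‖ := by rw [hK]; ring
    have hcauchy : CauchySeq (fun k : ℕ => cesaroMean T (k + 1)) := by
      apply cauchySeq_of_le_tendsto_0 (fun N : ℕ => 2 * K * ((N : ℝ) + 1)⁻¹)
      · intro p q N hp hq
        rw [dist_eq_norm]
        have hb := hdiff (p + 1) (q + 1) (Nat.le_add_left 1 p) (Nat.le_add_left 1 q)
        calc ‖cesaroMean T (p + 1) - cesaroMean T (q + 1)‖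
            ≤ (((p : ℝ) + 1)⁻¹ + ((q : ℝ) + 1)⁻¹) * K := by
              simpa using hb
          _ ≤ (((N : ℝ) + 1)⁻¹ + ((N : ℝ) + 1)⁻¹) * K := by
              have e1 : ((p : ℝ) + 1)⁻¹ ≤ ((N : ℝ) + 1)⁻¹ := by
                apply inv_anti₀ (by positivity)
                exact_mod_cast Nat.succ_le_succ hp
              have e2 : ((q : ℝ) + 1)⁻¹ ≤ ((N : ℝ) + 1)⁻¹ := by
                apply inv_anti₀ (by positivity)
                exact_mod_cast Nat.succ_le_succ hq
              exact mul_le_mul_of_nonneg_right (add_le_add e1 e2) hKnn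
          _ = 2 * K * ((N : ℝ) + 1)⁻¹ := by ring
      · have h0 : Tendsto (fun N : ℕ => ((N : ℝ) + 1)⁻¹) atTop (𝓝 0) := by
          simpa only [one_div] using tendsto_one_div_add_atTop_nhds_zero_nat (𝕜 := ℝ)
        simpa using h0.const_mul (2 * K)
    obtain ⟨P, hPt⟩ := cauchySeq_tendsto_of_complete hcauchy
    exact ⟨P, (tendsto_add_atTop_iff_nat 1).mp hPt⟩
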